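/- Finite convergence of the MM algorithm: any sequence (z^{(t)}) with z^{(t+1)} ∈ α(z^{(t)}) along which F is strictly decreasing is finite; consequently the MM algorithm terminates after finitely many iterations at a point satisfying the necessary conditions (C1) and (C2), and termination occurs at the first t with F(z^{(t)}) = F(z^{(t−1)}). -/

import Mathlib

open Matrix

/-- A warping path of order `m × n` with 1-indexed points. -/
def IsWarpingPath (m n : ℕ) (p : List (ℕ × ℕ)) : Prop :=
  p ≠ [] ∧
  p.head? = some (1, 1) ∧
  p.getLast? = some (m, n) ∧
  (∀ q ∈ p, 1 ≤ q.1 ∧ q.1 ≤ m ∧ 1 ≤ q.2 ∧ q.2 ≤ n) ∧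
  ∀ l, l + 1 < p.length →
    (p.getD (l + 1) (0, 0) = ((p.getD l (0, 0)).1 + 1, (p.getD l (0, 0)).2) ∨
     p.getD (l + 1) (0, 0) = ((p.getD l (0, 0)).1, (p.getD l (0, 0)).2 + 1) ∨
     p.getD (l + 1) (0, 0) = ((p.getD l (0, 0)).1 + 1, (p.getD l (0, 0)).2 + 1))

/-- Value of a time series `x ∈ ℝ^m` at the 1-indexed time point `i`. -/
def tsVal {m : ℕ} (x : Fin m → ℝ) (i : ℕ) : ℝ :=
  if h : i - 1 < m then x ⟨i - 1, h⟩ else 0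

/-- Cost of aligning `x` and `y` along warping path `p`. -/
def cost {m n : ℕ} (p : List (ℕ × ℕ)) (x : Fin m → ℝ) (y : Fin n → ℝ) : ℝ :=
  (p.map fun q => (tsVal x q.1 - tsVal y q.2) ^ 2).sum

/-- Squared DTW distance. -/
noncomputable def dtwSq (m n : ℕ) (x : Fin m → ℝ) (y : Fin n → ℝ) : ℝ :=
  sInf {c | ∃ p, IsWarpingPath m n p ∧ c = cost p x y}

/-- DTW distance. -/
noncomputable def dtw (m n : ℕ) (x : Fin m → ℝ) (y : Fin n → ℝ) : ℝ :=
  Real.sqrt (dtwSq m n x y)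

/-- Warping matrix of a warping path. -/
def warpMat (m n : ℕ) (p : List (ℕ × ℕ)) : Matrix (Fin m) (Fin n) ℝ :=
  fun i j => if ((i : ℕ) + 1, (j : ℕ) + 1) ∈ p then 1 else 0

/-- Valence matrix of a warping path. -/
def valMat (m n : ℕ) (p : List (ℕ × ℕ)) : Matrix (Fin m) (Fin m) ℝ :=
  Matrix.diagonal fun i => ∑ j, warpMat m n p i j

/-- First embedding matrix `Φ` induced by a warping path. -/
def embX (m : ℕ) (p : List (ℕ × ℕ)) : Matrix (Fin p.length) (Fin m) ℝ :=
  fun l i => if (p.get l).1 = (i : ℕ) + 1 then 1 else 0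

/-- Second embedding matrix `Ψ` induced by a warping path. -/
def embY (n : ℕ) (p : List (ℕ × ℕ)) : Matrix (Fin p.length) (Fin n) ℝ :=
  fun l j => if (p.get l).2 = (j : ℕ) + 1 then 1 else 0


namespace WP
variable {m n : ℕ} {p : List (ℕ × ℕ)}

lemma step_sum (hp : IsWarpingPath m n p) {l : ℕ} (h : l + 1 < p.length) :
    (p.getD l (0,0)).1 + (p.getD l (0,0)).2 < (p.getD (l+1) (0,0)).1 + (p.getD (l+1) (0,0)).2 := by
  rcases hp.2.2.2.2 l h with h' | h' | h' <;> rw [h'] <;> simp <;> omega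

lemma sum_strict (hp : IsWarpingPath m n p) : ∀ {a b : ℕ}, a < b → b < p.length →
    (p.getD a (0,0)).1 + (p.getD a (0,0)).2 < (p.getD b (0,0)).1 + (p.getD b (0,0)).2 := by
  intro a b hab hb
  induction b with
  | zero => omega
  | succ b ih =>
    rcases Nat.lt_succ_iff_lt_or_eq.mp hab with h | h
    · exact lt_trans (ih h (by omega)) (step_sum hp hb)
    · subst h; exact step_sum hp hb

lemma nodup (hp : IsWarpingPath m n p) : p.Nodup := by
  rw [List.nodup_iff_injective_get]
  intro a b hab
  by_contra hne
  have h1 : (a : ℕ) < p.length := a.2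
  have h2 : (b : ℕ) < p.length := b.2
  have ga : p.get a = p.getD (a : ℕ) (0,0) := (List.getD_eq_getElem p (0,0) a.2).symm
  have gb : p.get b = p.getD (b : ℕ) (0,0) := (List.getD_eq_getElem p (0,0) b.2).symm
  rcases lt_or_gt_of_ne (fun h => hne (Fin.ext h) : (a:ℕ) ≠ (b:ℕ)) with h | h
  · have := sum_strict hp h h2; rw [← ga, ← gb, hab] at this; omega
  · have := sum_strict hp h h1; rw [← ga, ← gb, hab] at this; omega

lemma getD_zero (hp : IsWarpingPath m n p) : p.getD 0 (0,0) = (1,1) := by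
  rcases p with _ | ⟨a, t⟩
  · exact absurd rfl hp.1
  · have := hp.2.1; simp at this; simpa using this

lemma getD_last (hp : IsWarpingPath m n p) : p.getD (p.length - 1) (0,0) = (m, n) := by
  have h0 : 0 < p.length := List.length_pos_iff.mpr hp.1
  have h1 : p.length - 1 < p.length := by omega
  have := hp.2.2.1
  rw [List.getLast?_eq_getElem?, List.getElem?_eq_getElem h1] at this
  rw [List.getD_eq_getElem p (0,0) h1]
  simpa using this

lemma sum_lower (hp : IsWarpingPath m n p) : ∀ {l : ℕ}, l < p.length →
    l + 2 ≤ (p.getD l (0,0)).1 + (p.getD l (0,0)).2 := by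
  intro l hl
  induction l with
  | zero => rw [getD_zero hp]; simp
  | succ l ih =>
    have := step_sum hp hl
    have := ih (by omega)
    omega

lemma length_le (hp : IsWarpingPath m n p) : p.length ≤ m + n := by
  have h0 : 0 < p.length := List.length_pos_iff.mpr hp.1
  have h1 : p.length - 1 < p.length := by omega
  have := sum_lower hp h1
  have hmem : p.getD (p.length - 1) (0,0) ∈ p := by
    rw [List.getD_eq_getElem p (0,0) h1]; exact List.getElem_mem h1
  have := hp.2.2.2.1 _ hmem
  omega

/-- discrete IVT for the first coordinate -/
lemma cover (hp : IsWarpingPath m n p) (i : Fin m) :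
    ∃ j : Fin n, ((i : ℕ) + 1, (j : ℕ) + 1) ∈ p := by
  classical
  set f : ℕ → ℕ := fun l => (p.getD l (0,0)).1 with hf
  have h0 : 0 < p.length := List.length_pos_iff.mpr hp.1
  set v : ℕ := (i : ℕ) + 1 with hv
  have hvm : v ≤ m := i.2
  have hex : ∃ l, l < p.length ∧ v ≤ f l := by
    refine ⟨p.length - 1, by omega, ?_⟩
    simp only [hf]; rw [getD_last hp]; omega
  -- there is an l with f l = v
  have key : ∃ l, l < p.length ∧ f l = v := by
    obtain ⟨l₀, hl₀⟩ := hex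
    induction l₀ with
    | zero =>
      refine ⟨0, h0, ?_⟩
      have : f 0 = 1 := by simp only [hf]; rw [getD_zero hp]
      omega
    | succ l ih =>
      by_cases hc : l < p.length ∧ v ≤ f l
      · exact ih hc
      · -- f (l+1) ≥ v, f l < v (or l ≥ length impossible)
        have hlen : l + 1 < p.length := hl₀.1
        have hfl : f l < v := by
          rcases Nat.lt_or_ge (f l) v with h | h
          · exact h
          · exact absurd ⟨by omega, h⟩ hc
        have hstep : f (l+1) = f l ∨ f (l+1) = f l + 1 := by
          rcases hp.2.2.2.2 l hlen with h' | h' | h' <;>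
            simp only [hf] <;> rw [h'] <;> simp
        refine ⟨l + 1, hlen, ?_⟩
        rcases hstep with h | h <;> omega
  obtain ⟨l, hl, hfl⟩ := key
  have hmem : p.getD l (0,0) ∈ p := by
    rw [List.getD_eq_getElem p (0,0) hl]; exact List.getElem_mem hl
  obtain ⟨h1, h2, h3, h4⟩ := hp.2.2.2.1 _ hmem
  refine ⟨⟨(p.getD l (0,0)).2 - 1, by omega⟩, ?_⟩
  have h5 : (p.getD l (0,0)).1 = (i:ℕ)+1 := hfl
  have h6 : (p.getD l (0,0)).2 - 1 + 1 = (p.getD l (0,0)).2 := by omega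
  have he : ((i:ℕ)+1, (p.getD l (0,0)).2 - 1 + 1) = p.getD l (0,0) :=
    Prod.ext_iff.mpr ⟨h5.symm, h6⟩
  show ((i:ℕ)+1, (p.getD l (0,0)).2 - 1 + 1) ∈ p
  rw [he]; exact hmem


lemma mem_bounds (hp : IsWarpingPath m n p) {q : ℕ × ℕ} (hq : q ∈ p) :
    1 ≤ q.1 ∧ q.1 ≤ m ∧ 1 ≤ q.2 ∧ q.2 ≤ n := hp.2.2.2.1 q hq

lemma m_pos (hp : IsWarpingPath m n p) : 0 < m := by
  rcases p with _ | ⟨a, t⟩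
  · exact absurd rfl hp.1
  · have := mem_bounds hp List.mem_cons_self; omega

lemma n_pos (hp : IsWarpingPath m n p) : 0 < n := by
  rcases p with _ | ⟨a, t⟩
  · exact absurd rfl hp.1
  · have := mem_bounds hp List.mem_cons_self; omega

/-- master lemma: list sum over a warping path equals indicator double sum -/
lemma sum_eq (hp : IsWarpingPath m n p) (g : ℕ × ℕ → ℝ) :
    (p.map g).sum = ∑ i : Fin m, ∑ j : Fin n,
      (if ((i:ℕ)+1, ((j:ℕ)+1)) ∈ p then g ((i:ℕ)+1, (j:ℕ)+1) else 0) := by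
  classical
  have hm : 0 < m := m_pos hp
  have hn : 0 < n := n_pos hp
  rw [← List.sum_toFinset g (nodup hp)]
  have h2 : (∑ ij ∈ Finset.univ.filter
        (fun ij : Fin m × Fin n => (((ij.1:ℕ)+1, (ij.2:ℕ)+1) : ℕ × ℕ) ∈ p),
        g ((ij.1:ℕ)+1, (ij.2:ℕ)+1))
      = ∑ i : Fin m, ∑ j : Fin n,
        (if ((i:ℕ)+1, ((j:ℕ)+1)) ∈ p then g ((i:ℕ)+1, (j:ℕ)+1) else 0) := by
    rw [Finset.sum_filter, Fintype.sum_prod_type]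
  rw [← h2]
  refine (Finset.sum_nbij'
      (i := fun ij : Fin m × Fin n => (((ij.1:ℕ)+1, (ij.2:ℕ)+1) : ℕ × ℕ))
      (j := fun q : ℕ × ℕ => ((⟨min (q.1-1) (m-1), by omega⟩ : Fin m),
                              (⟨min (q.2-1) (n-1), by omega⟩ : Fin n)))
      ?_ ?_ ?_ ?_ ?_).symm
  · intro ij hij
    exact List.mem_toFinset.mpr (Finset.mem_filter.mp hij).2
  · intro q hq
    obtain ⟨h1, h2, h3, h4⟩ := mem_bounds hp (List.mem_toFinset.mp hq)
    refine Finset.mem_filter.mpr ⟨Finset.mem_univ _, ?_⟩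
    have e1 : min (q.1-1) (m-1) + 1 = q.1 := by omega
    have e2 : min (q.2-1) (n-1) + 1 = q.2 := by omega
    simp only [e1, e2]
    exact List.mem_toFinset.mp hq
  · intro ij _
    have e1 : min ((ij.1:ℕ)+1-1) (m-1) = (ij.1:ℕ) := by have := ij.1.2; omega
    have e2 : min ((ij.2:ℕ)+1-1) (n-1) = (ij.2:ℕ) := by have := ij.2.2; omega
    have := ij.1.2; have := ij.2.2
    ext <;> simp [e1, e2] <;> omega
  · intro q hq
    obtain ⟨h1, h2, h3, h4⟩ := mem_bounds hp (List.mem_toFinset.mp hq)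
    have e1 : min (q.1-1) (m-1) + 1 = q.1 := by omega
    have e2 : min (q.2-1) (n-1) + 1 = q.2 := by omega
    simp only [e1, e2]
  · intro ij _
    rfl

end WP


namespace WP
variable {m n : ℕ} {p : List (ℕ × ℕ)}

lemma tsVal_succ {x : Fin m → ℝ} (i : Fin m) : tsVal x ((i:ℕ)+1) = x i := by
  have h : (i:ℕ) + 1 - 1 < m := by have := i.2; omega
  simp [tsVal, dif_pos h]

lemma cost_eq (hp : IsWarpingPath m n p) (x : Fin m → ℝ) (y : Fin n → ℝ) :
    cost p x y = ∑ i : Fin m, ∑ j : Fin n, warpMat m n p i j * (x i - y j) ^ 2 := by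
  rw [cost, sum_eq hp]
  refine Finset.sum_congr rfl fun i _ => Finset.sum_congr rfl fun j _ => ?_
  rw [warpMat, ite_mul, one_mul, zero_mul, tsVal_succ, tsVal_succ]

/-- nonnegativity of warp entries -/
lemma warp_nonneg (i : Fin m) (j : Fin n) : 0 ≤ warpMat m n p i j := by
  rw [warpMat]; split <;> norm_num

lemma warp_sum_pos (hp : IsWarpingPath m n p) (i : Fin m) :
    1 ≤ ∑ j, warpMat m n p i j := by
  obtain ⟨j, hj⟩ := cover hp i
  calc (1:ℝ) = warpMat m n p i j := by rw [warpMat, if_pos hj]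
  _ ≤ ∑ j', warpMat m n p i j' :=
    Finset.single_le_sum (fun j' _ => warp_nonneg i j') (Finset.mem_univ j)

end WP
lemma quad_min {A B c : ℝ} (hA : 0 ≤ A)
    (h : ∀ s : ℝ, 0 ≤ A*(s^2 - c^2) - 2*B*(s - c)) : A * c = B := by
  have hA1 : (0:ℝ) < A + 1 := by linarith
  set ε : ℝ := (A+1)⁻¹ with hεdef
  have hεpos : 0 < ε := inv_pos.mpr hA1
  have h1 : (A+1)*ε = 1 := mul_inv_cancel₀ (ne_of_gt hA1)
  have hAε : A*ε + ε = 1 := by linear_combination h1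
  set d : ℝ := A*c - B with hd
  have h2 := h (c - d*ε)
  have hB : B = A*c - d := by rw [hd]; ring
  have hexp : A*((c - d*ε)^2 - c^2) - 2*B*(c - d*ε - c) = d^2*ε*(A*ε-2) := by
    rw [hB]; ring
  rw [hexp] at h2
  have hd2 : d^2 ≤ 0 := by
    nlinarith [h2, hεpos, hAε, sq_nonneg d, mul_nonneg (sq_nonneg d) hεpos.le]
  have : d = 0 := by nlinarith [sq_nonneg d]
  linarith [this, hd.symm.le]

open Finset in
lemma normal_eq {N n : ℕ} (hN : 0 < N) {len : Fin N → ℕ} {C : Fin N → List (ℕ × ℕ)}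
    (hC : ∀ k, IsWarpingPath n (len k) (C k)) (X : (k : Fin N) → Fin (len k) → ℝ)
    (z : Fin n → ℝ)
    (hmin : ∀ x : Fin n → ℝ, ∑ k, cost (C k) z (X k) ≤ ∑ k, cost (C k) x (X k))
    (i : Fin n) :
    (∑ k, ∑ j, warpMat n (len k) (C k) i j) * z i
      = ∑ k, ∑ j, warpMat n (len k) (C k) i j * X k j := by
  classical
  set W : (k : Fin N) → Matrix (Fin n) (Fin (len k)) ℝ :=
    fun k => warpMat n (len k) (C k) with hW
  -- split cost into the i-part and the rest
  have split : ∀ x : Fin n → ℝ, ∑ k, cost (C k) x (X k)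
      = (∑ k, ∑ j, W k i j * (x i - X k j) ^ 2)
        + ∑ k, ∑ i' ∈ univ.erase i, ∑ j, W k i' j * (x i' - X k j) ^ 2 := by
    intro x
    rw [← Finset.sum_add_distrib]
    refine Finset.sum_congr rfl fun k _ => ?_
    rw [WP.cost_eq (hC k)]
    exact (Finset.add_sum_erase _ _ (Finset.mem_univ i)).symm
  have hkey : ∀ s : ℝ, (∑ k, ∑ j, W k i j * (z i - X k j) ^ 2)
      ≤ ∑ k, ∑ j, W k i j * (s - X k j) ^ 2 := by
    intro s
    have h := hmin (Function.update z i s)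
    rw [split, split] at h
    have htail : (∑ k, ∑ i' ∈ univ.erase i, ∑ j, W k i' j * (Function.update z i s i' - X k j) ^ 2)
        = ∑ k, ∑ i' ∈ univ.erase i, ∑ j, W k i' j * (z i' - X k j) ^ 2 := by
      refine Finset.sum_congr rfl fun k _ => Finset.sum_congr rfl fun i' hi' => ?_
      rw [Function.update_of_ne (Finset.ne_of_mem_erase hi')]
    rw [htail, Function.update_self] at h
    linarith [h]
  -- expand the quadratic
  have expand : ∀ s : ℝ, (∑ k, ∑ j, W k i j * (s - X k j) ^ 2)
      = (∑ k, ∑ j, W k i j) * s^2 - 2*(∑ k, ∑ j, W k i j * X k j)*s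
        + ∑ k, ∑ j, W k i j * (X k j)^2 := by
    intro s
    rw [Finset.sum_mul, Finset.mul_sum, Finset.sum_mul, ← Finset.sum_sub_distrib,
      ← Finset.sum_add_distrib]
    refine Finset.sum_congr rfl fun k _ => ?_
    rw [Finset.sum_mul, Finset.mul_sum, Finset.sum_mul, ← Finset.sum_sub_distrib,
      ← Finset.sum_add_distrib]
    exact Finset.sum_congr rfl fun j _ => by ring
  have hA : 0 ≤ ∑ k, ∑ j, W k i j :=
    Finset.sum_nonneg fun k _ => Finset.sum_nonneg fun j _ => WP.warp_nonneg i j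
  refine quad_min hA fun s => ?_
  have h := hkey s
  rw [expand s, expand (z i)] at h
  linarith

lemma paths_finite (m n : ℕ) : {p : List (ℕ × ℕ) | IsWarpingPath m n p}.Finite := by
  classical
  have hfin : {l : List (Fin (m+1) × Fin (n+1)) | l.length ≤ m + n}.Finite :=
    List.finite_length_le _ _
  have himg := hfin.image (List.map fun q : Fin (m+1) × Fin (n+1) => ((q.1 : ℕ), (q.2 : ℕ)))
  refine himg.subset ?_
  rintro p hp
  refine ⟨p.map (fun q => ((⟨q.1 % (m+1), Nat.mod_lt _ (by omega)⟩ : Fin (m+1)),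
      (⟨q.2 % (n+1), Nat.mod_lt _ (by omega)⟩ : Fin (n+1)))), ?_, ?_⟩
  · simp only [Set.mem_setOf_eq, List.length_map]
    exact WP.length_le hp
  · rw [List.map_map]
    have hcongr : ∀ q ∈ p, (((fun q : Fin (m+1) × Fin (n+1) => ((q.1 : ℕ), (q.2 : ℕ))) ∘
        (fun q : ℕ × ℕ => ((⟨q.1 % (m+1), Nat.mod_lt _ (by omega)⟩ : Fin (m+1)),
          (⟨q.2 % (n+1), Nat.mod_lt _ (by omega)⟩ : Fin (n+1))))) q) = id q := by
      intro q hq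
      obtain ⟨h1, h2, h3, h4⟩ := WP.mem_bounds hp hq
      have e1 : q.1 % (m+1) = q.1 := Nat.mod_eq_of_lt (by omega)
      have e2 : q.2 % (n+1) = q.2 := Nat.mod_eq_of_lt (by omega)
      simp [Function.comp, e1, e2]
    rw [List.map_congr_left hcongr, List.map_id]

lemma configs_finite (N n : ℕ) (len : Fin N → ℕ) :
    {C : Fin N → List (ℕ × ℕ) | ∀ k, IsWarpingPath n (len k) (C k)}.Finite := by
  refine (Set.Finite.pi (t := fun k => {p | IsWarpingPath n (len k) p})
    (fun k => paths_finite n (len k))).subset ?_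
  intro C hC
  exact Set.mem_univ_pi.mpr hC

section AuxLemmas

lemma cost_nonneg {m n : ℕ} (p : List (ℕ × ℕ)) (x : Fin m → ℝ) (y : Fin n → ℝ) :
    0 ≤ cost p x y := by
  refine List.sum_nonneg fun c hc => ?_
  obtain ⟨q, _, rfl⟩ := List.mem_map.mp hc
  positivity

lemma dtwSq_le_cost {m n : ℕ} {p : List (ℕ × ℕ)} (hp : IsWarpingPath m n p)
    (x : Fin m → ℝ) (y : Fin n → ℝ) : dtwSq m n x y ≤ cost p x y := by
  refine csInf_le ⟨0, ?_⟩ ⟨p, hp, rfl⟩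
  rintro c ⟨p', _, rfl⟩
  exact cost_nonneg p' x y

end AuxLemmas

/-- finite convergence of the MM algorithm. There is no infinite
MM trajectory along which the Fréchet function strictly decreases; and if an MM
update does not decrease the Fréchet value (the termination criterion), then the
resulting point satisfies the necessary conditions (C1) and (C2). -/
theorem mm_finite_convergence (n N : ℕ) (hN : 0 < N) (hn : 1 ≤ n)
    (len : Fin N → ℕ) (hlen : ∀ k, 1 ≤ len k)
    (X : (k : Fin N) → Fin (len k) → ℝ) :
    (¬ ∃ zs : ℕ → (Fin n → ℝ), ∀ t : ℕ,
      (∃ C : Fin N → List (ℕ × ℕ),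
        (∀ k, IsWarpingPath n (len k) (C k)) ∧
        (1 / N : ℝ) * ∑ k, cost (C k) (zs t) (X k) =
          (1 / N : ℝ) * ∑ k, dtwSq n (len k) (zs t) (X k) ∧
        ∀ x : Fin n → ℝ,
          (1 / N : ℝ) * ∑ k, cost (C k) (zs (t + 1)) (X k) ≤
          (1 / N : ℝ) * ∑ k, cost (C k) x (X k)) ∧
      (1 / N : ℝ) * ∑ k, dtwSq n (len k) (zs (t + 1)) (X k) <
        (1 / N : ℝ) * ∑ k, dtwSq n (len k) (zs t) (X k)) ∧
    (∀ z z' : Fin n → ℝ,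
      (∃ C : Fin N → List (ℕ × ℕ),
        (∀ k, IsWarpingPath n (len k) (C k)) ∧
        (1 / N : ℝ) * ∑ k, cost (C k) z (X k) =
          (1 / N : ℝ) * ∑ k, dtwSq n (len k) z (X k) ∧
        ∀ x : Fin n → ℝ,
          (1 / N : ℝ) * ∑ k, cost (C k) z' (X k) ≤
          (1 / N : ℝ) * ∑ k, cost (C k) x (X k)) →
      (1 / N : ℝ) * ∑ k, dtwSq n (len k) z' (X k) =
        (1 / N : ℝ) * ∑ k, dtwSq n (len k) z (X k) →
      ∃ C : Fin N → List (ℕ × ℕ),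
        (∀ k, IsWarpingPath n (len k) (C k)) ∧
        (1 / N : ℝ) * ∑ k, dtwSq n (len k) z' (X k) =
          (1 / N : ℝ) * ∑ k, cost (C k) z' (X k) ∧
        z' = (∑ k, valMat n (len k) (C k))⁻¹.mulVec
          (∑ k, (warpMat n (len k) (C k)).mulVec (X k))) := by
  classical
  have hNR : (0:ℝ) < (N:ℝ) := by exact_mod_cast hN
  have h1N : (0:ℝ) < 1/(N:ℝ) := by positivity
  constructor
  · -- Part 1: no infinite strictly decreasing trajectory
    rintro ⟨zs, hzs⟩
    have hdec : ∀ t, (1 / N : ℝ) * ∑ k, dtwSq n (len k) (zs (t + 1)) (X k) <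
        (1 / N : ℝ) * ∑ k, dtwSq n (len k) (zs t) (X k) := fun t => (hzs t).2
    choose Cs hCs hopt hmin using fun t => (hzs t).1
    -- F along the trajectory
    set F : (Fin n → ℝ) → ℝ := fun x => (1/N : ℝ) * ∑ k, dtwSq n (len k) x (X k) with hF
    set Fc : (Fin N → List (ℕ × ℕ)) → (Fin n → ℝ) → ℝ :=
      fun C x => (1/N : ℝ) * ∑ k, cost (C k) x (X k) with hFc
    have hFle : ∀ (t : ℕ) (x : Fin n → ℝ), F x ≤ Fc (Cs t) x := by
      intro t x
      refine mul_le_mul_of_nonneg_left ?_ h1N.le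
      exact Finset.sum_le_sum fun k _ => dtwSq_le_cost (hCs t k) x (X k)
    have hanti : ∀ a b : ℕ, a ≤ b → F (zs b) ≤ F (zs a) := by
      intro a b hab
      induction b, hab using Nat.le_induction with
      | base => exact le_refl _
      | succ b hab ih => exact le_trans (hdec b).le ih
    set g : ℕ → ℝ := fun t => Fc (Cs t) (zs (t+1)) with hg
    have hgF : ∀ t, g t ≤ F (zs t) := by
      intro t
      calc g t ≤ Fc (Cs t) (zs t) := hmin t (zs t)
      _ = F (zs t) := hopt t
    have hFg : ∀ t, F (zs (t+1)) ≤ g t := fun t => hFle t (zs (t+1))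
    have hgmono : ∀ s t : ℕ, s + 2 ≤ t → g t < g s := by
      intro s t hst
      calc g t ≤ F (zs t) := hgF t
      _ ≤ F (zs (s+2)) := hanti _ _ hst
      _ < F (zs (s+1)) := hdec (s+1)
      _ ≤ g s := hFg s
    -- equal configurations have equal g values
    have hgeq : ∀ s t : ℕ, Cs s = Cs t → g s ≤ g t := by
      intro s t hC
      calc g s ≤ Fc (Cs s) (zs (t+1)) := hmin s (zs (t+1))
      _ = g t := by rw [hC]
    -- the map t ↦ Cs (2*t) is injective into a finite set
    have hfin := configs_finite N n len
    have hmem : ∀ t, Cs (2*t) ∈ {C : Fin N → List (ℕ × ℕ) | ∀ k, IsWarpingPath n (len k) (C k)} :=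
      fun t => hCs (2*t)
    have hinj : Function.Injective (fun t : ℕ =>
        (⟨Cs (2*t), hmem t⟩ : {C : Fin N → List (ℕ × ℕ) | ∀ k, IsWarpingPath n (len k) (C k)})) := by
      intro a b hab
      simp only [Subtype.mk.injEq] at hab
      by_contra hne
      rcases Nat.lt_or_ge a b with h | h
      · have h1 := hgmono (2*a) (2*b) (by omega)
        have h2 := hgeq (2*a) (2*b) hab
        linarith
      · have hba : b < a := by omega
        have h1 := hgmono (2*b) (2*a) (by omega)
        have h2 := hgeq (2*b) (2*a) hab.symm
        linarith
    have : Finite {C : Fin N → List (ℕ × ℕ) | ∀ k, IsWarpingPath n (len k) (C k)} :=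
      hfin.to_subtype
    have : Finite ℕ := Finite.of_injective _ hinj
    exact not_finite ℕ
  · -- Part 2: termination yields (C1) and (C2)
    rintro z z' ⟨C, hC, hopt, hmin⟩ heq
    refine ⟨C, hC, ?_, ?_⟩
    · -- F(z') = F_C(z')
      have h1 : (1/N : ℝ) * ∑ k, dtwSq n (len k) z' (X k)
          ≤ (1/N : ℝ) * ∑ k, cost (C k) z' (X k) := by
        refine mul_le_mul_of_nonneg_left ?_ h1N.le
        exact Finset.sum_le_sum fun k _ => dtwSq_le_cost (hC k) z' (X k)
      have h2 : (1/N : ℝ) * ∑ k, cost (C k) z' (X k)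
          ≤ (1/N : ℝ) * ∑ k, dtwSq n (len k) z' (X k) := by
        calc (1/N : ℝ) * ∑ k, cost (C k) z' (X k)
            ≤ (1/N : ℝ) * ∑ k, cost (C k) z (X k) := hmin z
        _ = (1/N : ℝ) * ∑ k, dtwSq n (len k) z (X k) := hopt
        _ = (1/N : ℝ) * ∑ k, dtwSq n (len k) z' (X k) := heq.symm
      linarith
    · -- the normal equations
      have hmin' : ∀ x : Fin n → ℝ, ∑ k, cost (C k) z' (X k) ≤ ∑ k, cost (C k) x (X k) := by
        intro x
        have := hmin x
        have h := (mul_le_mul_iff_right₀ h1N).mp this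
        exact h
      have hnormal := normal_eq hN hC X z' hmin'
      set d : Fin n → ℝ := fun i => ∑ k, ∑ j, warpMat n (len k) (C k) i j with hd
      have hdpos : ∀ i, 0 < d i := by
        intro i
        have : (N:ℝ) ≤ d i := by
          calc (N:ℝ) = ∑ _k : Fin N, (1:ℝ) := by simp
          _ ≤ d i := Finset.sum_le_sum fun k _ => WP.warp_sum_pos (hC k) i
        linarith
      have hV : ∑ k, valMat n (len k) (C k) = Matrix.diagonal d := by
        ext a b
        rw [Matrix.sum_apply]
        by_cases hab : a = b
        · subst hab
          simp [valMat, Matrix.diagonal_apply_eq, hd]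
        · simp [valMat, Matrix.diagonal_apply_ne _ hab]
      have hVinv : (Matrix.diagonal d)⁻¹ = Matrix.diagonal (fun i => (d i)⁻¹) := by
        refine Matrix.inv_eq_right_inv ?_
        rw [Matrix.diagonal_mul_diagonal]
        have : (fun i => d i * (d i)⁻¹) = fun _ => (1:ℝ) :=
          funext fun i => mul_inv_cancel₀ (hdpos i).ne'
        rw [this, Matrix.diagonal_one]
      funext i
      rw [hV, hVinv, Matrix.mulVec_diagonal]
      have hsum : (∑ k, (warpMat n (len k) (C k)).mulVec (X k)) i
          = ∑ k, ∑ j, warpMat n (len k) (C k) i j * X k j := by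
        rw [Finset.sum_apply]
        exact Finset.sum_congr rfl fun k _ => rfl
      rw [hsum, ← hnormal i]
      rw [inv_mul_cancel_left₀ (hdpos i).ne']
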